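/- (Carleman's condition) Let μ be a Borel probability measure on ℝ with all moments m_k = ∫ x^k dμ finite. If limsup_{k→∞} m_{2k}^{1/(2k)} / (2k) < ∞, then μ is the unique probability measure on ℝ with moment sequence (m_k). -/
import Mathlib

open scoped BigOperators
open MeasureTheory Filter Complex Set Topology
open scoped Nat Real NNReal ENNReal


lemma absPow_le (x : ℝ) (n : ℕ) : |x| ^ n ≤ 1 + x ^ (2 * n) := by
  rcases le_total (|x|) 1 with h | h
  · have : |x| ^ n ≤ 1 := pow_le_one₀ (abs_nonneg x) h
    have h2 : 0 ≤ x ^ (2 * n) := Even.pow_nonneg (even_two_mul n) x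
    linarith
  · have : |x| ^ n ≤ |x| ^ (2 * n) := pow_le_pow_right₀ h (by omega)
    have h2 : |x| ^ (2 * n) = x ^ (2 * n) := by
      rw [← _root_.abs_pow, _root_.abs_of_nonneg (Even.pow_nonneg (even_two_mul n) x)]
    nlinarith
lemma carle_absInt (μ : Measure ℝ) [IsProbabilityMeasure μ]
    (hint : ∀ k : ℕ, Integrable (fun x : ℝ => x ^ k) μ) (n : ℕ) :
    Integrable (fun x : ℝ => |x| ^ n) μ := by
  refine Integrable.mono' ((integrable_const (1:ℝ)).add (hint (2*n))) ?_ ?_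
  · exact (_root_.continuous_abs.pow n).aestronglyMeasurable
  · filter_upwards with x
    rw [Real.norm_of_nonneg (by positivity)]
    exact absPow_le x n

lemma absPow_le' (x : ℝ) (n : ℕ) (h : Even (n+1)) : |x| ^ n ≤ 1 + x ^ (n + 1) := by
  have h2 : |x| ^ (n+1) = x ^ (n+1) := by
    rw [← _root_.abs_pow, _root_.abs_of_nonneg (h.pow_nonneg x)]
  rcases le_total (|x|) 1 with hx | hx
  · have : |x| ^ n ≤ 1 := pow_le_one₀ (abs_nonneg x) hx
    have h3 : (0:ℝ) ≤ x ^ (n+1) := h.pow_nonneg x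
    linarith
  · have : |x| ^ n ≤ |x| ^ (n + 1) := pow_le_pow_right₀ hx (by omega)
    nlinarith

lemma pow_self_le (k : ℕ) : (k:ℝ)^k ≤ Real.exp 1 ^ k * k ! := by
  have h := Real.pow_div_factorial_le_exp (x := (k:ℝ)) (Nat.cast_nonneg k) k
  rw [div_le_iff₀ (by positivity)] at h
  calc (k:ℝ)^k ≤ Real.exp k * k ! := h
    _ = Real.exp 1 ^ k * k ! := by rw [← Real.exp_nat_mul]; norm_num

lemma sq_factorial_le (k : ℕ) : ((k ! : ℝ))^2 ≤ ((2*k)! : ℝ) := by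
  have h := Nat.factorial_mul_factorial_dvd_factorial_add k k
  have h2 : k ! * k ! ≤ (k + k)! := Nat.le_of_dvd (Nat.factorial_pos _) h
  have : (2*k) = k + k := by omega
  rw [this]
  push_cast [← Nat.cast_le (α := ℝ)] at h2 ⊢
  nlinarith [h2]

lemma carle_even_bound (μ : Measure ℝ) (C : ℝ) (e : ℝ) (he : e = Real.exp 1) {N k : ℕ}
    (hk : N ≤ k) (hbd : ∀ j, N ≤ j → ∫ x, x ^ (2*j) ∂μ ≤ (2*C*j)^(2*j)) (hC : 0 ≤ C) :
    ∫ x, x^(2*k) ∂μ ≤ (2*C*e)^(2*k) * (2*k)! := by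
  have h1 : ((k:ℝ))^(2*k) ≤ e^(2*k) * (2*k)! := by
    have h2 := pow_self_le k
    have h3 := sq_factorial_le k
    have h4 : ((k:ℝ))^(2*k) = ((k:ℝ)^k)^2 := by rw [two_mul, pow_add, sq]
    have h5 : (e:ℝ)^(2*k) = (e^k)^2 := by rw [two_mul, pow_add, sq]
    have he0 : (0:ℝ) ≤ e^k := by rw [he]; positivity
    have hf0 : (0:ℝ) ≤ (k ! : ℝ) := Nat.cast_nonneg _
    have hk0 : (0:ℝ) ≤ (k:ℝ)^k := by positivity
    rw [h4, h5]
    calc ((k:ℝ)^k)^2 ≤ (e^k * k !)^2 := by rw [← he] at h2; nlinarith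
      _ = (e^k)^2 * ((k !:ℝ))^2 := by ring
      _ ≤ (e^k)^2 * ((2*k)! : ℝ) := by nlinarith
  calc ∫ x, x^(2*k) ∂μ ≤ (2*C*k)^(2*k) := hbd k hk
    _ = (2*C)^(2*k) * ((k:ℝ))^(2*k) := by rw [mul_pow]
    _ ≤ (2*C)^(2*k) * (e^(2*k) * (2*k)!) := by
        have : (0:ℝ) ≤ (2*C)^(2*k) := by positivity
        nlinarith
    _ = (2*C*e)^(2*k) * (2*k)! := by rw [mul_pow 2 C, mul_pow (2*C) e]; ring

lemma carle_single (μ : Measure ℝ) [IsProbabilityMeasure μ]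
    (hint : ∀ k : ℕ, Integrable (fun x : ℝ => x ^ k) μ)
    (C : ℝ) (N : ℕ) (hC : 1 ≤ C)
    (hbd : ∀ k, N ≤ k → ∫ x, x ^ (2*k) ∂μ ≤ (2*C*k)^(2*k)) :
    ∃ K : ℝ, 1 ≤ K ∧ ∀ n, ∫ x, |x|^n ∂μ ≤ K * (4*C*Real.exp 1)^n * n ! := by
  set e := Real.exp 1 with he
  have he1 : 1 ≤ e := by rw [he]; exact Real.one_le_exp (by norm_num)
  have hC0 : (0:ℝ) ≤ C := by linarith
  have habs : ∀ j : ℕ, ∫ x, |x|^(2*j) ∂μ = ∫ x, x^(2*j) ∂μ := by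
    intro j
    congr 1
    funext x
    rw [← _root_.abs_pow, _root_.abs_of_nonneg (Even.pow_nonneg (even_two_mul j) x)]
  have hmom_nonneg : ∀ j : ℕ, 0 ≤ ∫ x, x^(2*j) ∂μ := by
    intro j
    rw [← habs j]
    exact integral_nonneg fun x => by positivity
  set K : ℝ := (1 + 4*C*e) + ∑ j ∈ Finset.range (2*N), (1 + ∫ x, x^(2*j) ∂μ) with hK
  have hsum_nonneg : (0:ℝ) ≤ ∑ j ∈ Finset.range (2*N), (1 + ∫ x, x^(2*j) ∂μ) :=
    Finset.sum_nonneg fun j _ => by linarith [hmom_nonneg j]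
  have hK1 : 1 ≤ K := by
    have : (0:ℝ) ≤ 4*C*e := by positivity
    simp only [hK]; linarith
  refine ⟨K, hK1, fun n => ?_⟩
  have hce1 : 1 ≤ 2*C*e := by nlinarith
  have hc1 : 1 ≤ 4*C*e := by nlinarith
  have hone : (1:ℝ) ≤ (4*C*e)^n * n ! := by
    have h1 : (1:ℝ) ≤ (4*C*e)^n := one_le_pow₀ hc1
    have h2 : (1:ℝ) ≤ (n ! : ℝ) := by exact_mod_cast Nat.one_le_iff_ne_zero.mpr (Nat.factorial_ne_zero n)
    nlinarith
  by_cases hsmall : n < 2*N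
  · -- small case
    have h1 : ∫ x, |x|^n ∂μ ≤ 1 + ∫ x, x^(2*n) ∂μ := by
      calc ∫ x, |x|^n ∂μ ≤ ∫ x, (1 + x^(2*n)) ∂μ := by
            refine integral_mono (carle_absInt μ hint n) ((integrable_const 1).add (hint (2*n))) ?_
            intro x; exact absPow_le x n
        _ = 1 + ∫ x, x^(2*n) ∂μ := by
            rw [integral_add (integrable_const 1) (hint (2*n)), integral_const]
            simp
    have h2 : 1 + ∫ x, x^(2*n) ∂μ ≤ K := by
      have h3 : (1 + ∫ x, x^(2*n) ∂μ) ≤ ∑ j ∈ Finset.range (2*N), (1 + ∫ x, x^(2*j) ∂μ) :=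
        Finset.single_le_sum (f := fun j => 1 + ∫ x, x^(2*j) ∂μ)
          (fun j _ => by beta_reduce; linarith [hmom_nonneg j]) (Finset.mem_range.mpr hsmall)
      have : (0:ℝ) ≤ 4*C*e := by positivity
      simp only [hK]; linarith
    calc ∫ x, |x|^n ∂μ ≤ K := le_trans h1 h2
      _ = K * 1 := (mul_one K).symm
      _ ≤ K * ((4*C*e)^n * n !) := by nlinarith
      _ = K * (4*C*e)^n * n ! := by ring
  · push_neg at hsmall
    rcases Nat.even_or_odd n with ⟨k, hkn⟩ | ⟨k, hkn⟩
    · -- even, n = k + k, k ≥ N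
      have hkN : N ≤ k := by omega
      have hn2 : n = 2*k := by omega
      subst hn2
      rw [habs k]
      calc ∫ x, x^(2*k) ∂μ ≤ (2*C*e)^(2*k) * (2*k)! := carle_even_bound μ C e he hkN hbd hC0
        _ ≤ K * (4*C*e)^(2*k) * (2*k)! := by
            have h1 : (2*C*e)^(2*k) ≤ (4*C*e)^(2*k) := by
              apply pow_le_pow_left₀ (by positivity); nlinarith
            have h2 : (0:ℝ) ≤ ((2*k)! : ℝ) := Nat.cast_nonneg _
            have h3 : (0:ℝ) ≤ (4*C*e)^(2*k) := by positivity
            nlinarith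
    · -- odd, n = 2k+1, k ≥ N (since 2k+1 ≥ 2N)
      have hkN : N ≤ k + 1 := by omega
      subst hkn
      have h1 : ∫ x, |x|^(2*k+1) ∂μ ≤ 1 + ∫ x, x^(2*(k+1)) ∂μ := by
        calc ∫ x, |x|^(2*k+1) ∂μ ≤ ∫ x, (1 + x^(2*k+1+1)) ∂μ := by
              refine integral_mono (carle_absInt μ hint _) ((integrable_const 1).add (hint _)) ?_
              intro x; exact absPow_le' x (2*k+1) ⟨k+1, by ring⟩
          _ = 1 + ∫ x, x^(2*(k+1)) ∂μ := by
              rw [integral_add (integrable_const 1) (hint _), integral_const]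
              norm_num
              rw [show 2*k+1+1 = 2*(k+1) by ring]
      have h2 : ∫ x, x^(2*(k+1)) ∂μ ≤ (2*C*e)^(2*(k+1)) * (2*(k+1))! :=
        carle_even_bound μ C e he hkN hbd hC0
      have h3 : (2*C*e)^(2*(k+1)) * ((2*(k+1))! : ℝ) ≤ (2*C*e) * (4*C*e)^(2*k+1) * (2*k+1)! := by
        have hfac : ((2*(k+1))! : ℝ) = (2*k+2) * ((2*k+1)! : ℝ) := by
          rw [show 2*(k+1) = (2*k+1)+1 by ring]
          push_cast [Nat.factorial_succ]
          ring
        rw [hfac]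
        have hgrow : (2*C*e)^(2*(k+1)) * (2*(k:ℝ)+2) ≤ (2*C*e) * (4*C*e)^(2*k+1) := by
          have hpow2 : (2*(k:ℝ)+2) ≤ 2^(2*k+1) := by
            have hp : ∀ i:ℕ, 2*i+2 ≤ 2^(2*i+1) := by
              intro i
              induction i with
              | zero => norm_num
              | succ j ih =>
                have h2j : 2^(2*(j+1)+1) = 2^(2*j+1) * 4 := by
                  rw [show 2*(j+1)+1 = (2*j+1)+2 by ring, pow_add]; norm_num
                omega
            exact_mod_cast hp k
          have hsplit : (2*C*e)^(2*(k+1)) = (2*C*e) * (2*C*e)^(2*k+1) := by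
            rw [show 2*(k+1) = (2*k+1)+1 by ring, pow_succ]; ring
          rw [hsplit]
          have h4 : (2*C*e)^(2*k+1) * (2*(k:ℝ)+2) ≤ (2*C*e)^(2*k+1) * 2^(2*k+1) := by
            have : (0:ℝ) ≤ (2*C*e)^(2*k+1) := by positivity
            nlinarith
          have h5 : (2*C*e)^(2*k+1) * 2^(2*k+1) = (4*C*e)^(2*k+1) := by
            rw [← mul_pow]; congr 1; ring
          have hce0 : (0:ℝ) ≤ 2*C*e := by linarith
          calc (2*C*e) * (2*C*e)^(2*k+1) * (2*(k:ℝ)+2)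
              = (2*C*e) * ((2*C*e)^(2*k+1) * (2*(k:ℝ)+2)) := by ring
            _ ≤ (2*C*e) * ((4*C*e)^(2*k+1)) := by
                rw [← h5]; exact mul_le_mul_of_nonneg_left h4 hce0
        have hfac1 : (1:ℝ) ≤ ((2*k+1)! : ℝ) := by
          exact_mod_cast Nat.one_le_iff_ne_zero.mpr (Nat.factorial_ne_zero _)
        have hlhs0 : (0:ℝ) ≤ (2*C*e)^(2*(k+1)) := by positivity
        nlinarith [hgrow, hfac1]
      have hfin : 1 + (2*C*e) * (4*C*e)^(2*k+1) * ((2*k+1)! : ℝ) ≤ K * (4*C*e)^(2*k+1) * (2*k+1)! := by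
        have hone' : (1:ℝ) ≤ (4*C*e)^(2*k+1) * (2*k+1)! := hone
        have hK2 : 1 + (2*C*e) ≤ K := by
          simp only [hK]; nlinarith
        nlinarith [mul_le_mul_of_nonneg_right hK2 (le_trans zero_le_one hone')]
      linarith


lemma fact_add_le (j k : ℕ) : ((j+k)! : ℝ) ≤ 2^(j+k) * j ! * k ! := by
  have h1 : (j+k).choose k * j ! * k ! = (j+k)! := Nat.add_choose_mul_factorial_mul_factorial j k
  have h2 : (j+k).choose k ≤ 2^(j+k) := by
    calc (j+k).choose k ≤ ∑ i ∈ Finset.range (j+k+1), (j+k).choose i :=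
          Finset.single_le_sum (fun i _ => Nat.zero_le _) (Finset.mem_range.mpr (by omega))
      _ = 2^(j+k) := Nat.sum_range_choose (j+k)
  have : (j+k)! ≤ 2^(j+k) * j ! * k ! := by
    rw [← h1]
    exact Nat.mul_le_mul_right _ (Nat.mul_le_mul_right _ h2)
  exact_mod_cast this

lemma twisted_norm (t : ℝ) (j : ℕ) (x : ℝ) :
    ‖(x:ℂ)^j * Complex.exp ((t*x:ℝ) * Complex.I)‖ = |x|^j := by
  rw [norm_mul, norm_pow, Complex.norm_real, Complex.norm_exp_ofReal_mul_I]
  simp [Real.norm_eq_abs]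


lemma twisted_integrable (μ : Measure ℝ) [IsProbabilityMeasure μ]
    (hint : ∀ k : ℕ, Integrable (fun x : ℝ => x ^ k) μ) (t : ℝ) (j : ℕ) :
    Integrable (fun x : ℝ => (x:ℂ)^j * Complex.exp ((t*x:ℝ) * Complex.I)) μ := by
  refine Integrable.mono' (carle_absInt μ hint j) ?_ ?_
  · apply Continuous.aestronglyMeasurable
    continuity
  · filter_upwards with x
    rw [twisted_norm]

lemma twisted_expand (μ : Measure ℝ) [IsProbabilityMeasure μ]
    (hint : ∀ k : ℕ, Integrable (fun x : ℝ => x ^ k) μ)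
    (K E : ℝ) (hK : 1 ≤ K) (hE : 1 ≤ E)
    (hmom : ∀ n : ℕ, ∫ x, |x|^n ∂μ ≤ K * E^n * n !)
    (t s : ℝ) (hs : |s| ≤ 1/(4*E)) (j : ℕ) :
    ∫ x, (x:ℂ)^j * Complex.exp (((t+s)*x:ℝ) * Complex.I) ∂μ
      = ∑' k : ℕ, (((s:ℂ)*Complex.I)^k / (k ! : ℂ))
          * ∫ x, (x:ℂ)^(j+k) * Complex.exp ((t*x:ℝ) * Complex.I) ∂μ := by
  set F : ℕ → ℝ → ℂ := fun k x =>
    (((s:ℂ)*Complex.I)^k / (k ! : ℂ)) * ((x:ℂ)^(j+k) * Complex.exp ((t*x:ℝ) * Complex.I)) with hF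
  have hE0 : (0:ℝ) < E := by linarith
  -- integrability of each term
  have hFint : ∀ k, Integrable (F k) μ := fun k =>
    (twisted_integrable μ hint t (j+k)).const_mul _
  -- norm of each term
  have hFnorm : ∀ k x, ‖F k x‖ = |s|^k / k ! * |x|^(j+k) := by
    intro k x
    have h0 : ‖((s:ℂ)*Complex.I)^k / (k ! : ℂ)‖ = |s|^k / k ! := by
      rw [norm_div, norm_pow, norm_mul, Complex.norm_real, Complex.norm_I,
        Complex.norm_natCast, Real.norm_eq_abs, mul_one]
    simp only [hF]
    rw [norm_mul, h0, twisted_norm t (j+k) x]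
  -- summability of integrals of norms
  have hsum : Summable fun k : ℕ => ∫ x, ‖F k x‖ ∂μ := by
    have hle : ∀ k : ℕ, ∫ x, ‖F k x‖ ∂μ ≤ (K * (2*E)^j * j !) * (1/2)^k := by
      intro k
      have h1 : ∫ x, ‖F k x‖ ∂μ = |s|^k / k ! * ∫ x, |x|^(j+k) ∂μ := by
        simp_rw [hFnorm]
        exact integral_const_mul _ _
      rw [h1]
      have h2 : ∫ x, |x|^(j+k) ∂μ ≤ K * E^(j+k) * (j+k)! := hmom (j+k)
      have h3 : ((j+k)! : ℝ) ≤ 2^(j+k) * j ! * k ! := fact_add_le j k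
      have hknn : (0:ℝ) < (k ! : ℝ) := by exact_mod_cast Nat.factorial_pos k
      have hs0 : 0 ≤ |s| := abs_nonneg s
      have hsk : |s|^k * (2*E)^k ≤ (1/2)^k := by
        have hthis : |s| * (2*E) ≤ 1/2 := by
          have hh := mul_le_mul_of_nonneg_right hs (by positivity : (0:ℝ) ≤ 2*E)
          have he : (1/(4*E)) * (2*E) = 1/2 := by field_simp; ring
          linarith
        calc |s|^k * (2*E)^k = (|s| * (2*E))^k := by rw [← mul_pow]
          _ ≤ (1/2)^k := pow_le_pow_left₀ (by positivity) hthis k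
      have hmono : |s|^k / k ! * (K * E^(j+k) * ((j+k)! : ℝ)) ≤ (K * (2*E)^j * j !) * (1/2)^k := by
        have hKE : 0 ≤ K := by linarith
        have e1 : |s|^k / k ! * (K * E^(j+k) * ((j+k)! : ℝ))
            ≤ |s|^k / k ! * (K * E^(j+k) * (2^(j+k) * j ! * k !)) := by
          have : (0:ℝ) ≤ |s|^k / k ! * (K * E^(j+k)) := by positivity
          have h4 : (0:ℝ) ≤ K * E^(j+k) := by positivity
          gcongr
        have e2 : |s|^k / k ! * (K * E^(j+k) * (2^(j+k) * j ! * k !))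
            = (K * (2*E)^j * j !) * (|s|^k * (2*E)^k) := by
          field_simp
          rw [pow_add, pow_add, mul_pow, mul_pow]
          ring
        have e3 : (K * (2*E)^j * j !) * (|s|^k * (2*E)^k) ≤ (K * (2*E)^j * j !) * (1/2)^k := by
          have : (0:ℝ) ≤ K * (2*E)^j * j ! := by positivity
          exact mul_le_mul_of_nonneg_left hsk this
        linarith
      have hint_nonneg : 0 ≤ ∫ x, |x|^(j+k) ∂μ := integral_nonneg fun x => by positivity
      calc |s|^k / k ! * ∫ x, |x|^(j+k) ∂μ ≤ |s|^k / k ! * (K * E^(j+k) * ((j+k)! : ℝ)) := by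
            have : (0:ℝ) ≤ |s|^k / k ! := by positivity
            exact mul_le_mul_of_nonneg_left h2 this
        _ ≤ _ := hmono
    apply Summable.of_nonneg_of_le (fun k => integral_nonneg fun x => norm_nonneg _) hle
    exact (summable_geometric_of_lt_one (by norm_num) (by norm_num)).mul_left _
  -- pointwise sum
  have hptwise : ∀ x : ℝ, ∑' k : ℕ, F k x = (x:ℂ)^j * Complex.exp (((t+s)*x:ℝ) * Complex.I) := by
    intro x
    have h1 : ∑' k : ℕ, F k x
        = (∑' k : ℕ, ((s:ℂ)*(x:ℂ)*Complex.I)^k / (k ! : ℂ)) * ((x:ℂ)^j * Complex.exp ((t*x:ℝ) * Complex.I)) := by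
      rw [← tsum_mul_right]
      congr 1
      funext k
      rw [hF]
      simp only []
      rw [pow_add]
      have : ((s:ℂ)*(x:ℂ)*Complex.I)^k = ((s:ℂ)*Complex.I)^k * (x:ℂ)^k := by
        rw [← mul_pow]
        congr 1
        ring
      rw [this]
      ring
    rw [h1]
    have h2 : Complex.exp ((s*x:ℝ) * Complex.I) = ∑' k : ℕ, ((s:ℂ)*(x:ℂ)*Complex.I)^k / (k ! : ℂ) := by
      rw [show (((s*x:ℝ)):ℂ) * Complex.I = (s:ℂ)*(x:ℂ)*Complex.I by push_cast; ring,
        Complex.exp_eq_exp_ℂ, NormedSpace.exp_eq_tsum_div]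
    rw [← h2]
    rw [show ((((t+s)*x : ℝ)):ℂ) * Complex.I = ↑(s*x)*Complex.I + ↑(t*x)*Complex.I by push_cast; ring,
      Complex.exp_add]
    ring
  -- interchange
  have hinter := integral_tsum_of_summable_integral_norm hFint hsum
  calc ∫ x, (x:ℂ)^j * Complex.exp (((t+s)*x:ℝ) * Complex.I) ∂μ
      = ∫ x, ∑' k : ℕ, F k x ∂μ := by
        congr 1; funext x; rw [hptwise x]
    _ = ∑' k : ℕ, ∫ x, F k x ∂μ := hinter.symm
    _ = ∑' k : ℕ, (((s:ℂ)*Complex.I)^k / (k ! : ℂ))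
          * ∫ x, (x:ℂ)^(j+k) * Complex.exp ((t*x:ℝ) * Complex.I) ∂μ := by
        congr 1
        funext k
        rw [hF]
        exact integral_const_mul _ _

lemma integral_complex_ofReal' (μ : Measure ℝ) (f : ℝ → ℝ) :
    ∫ x, ((f x : ℝ) : ℂ) ∂μ = ((∫ x, f x ∂μ : ℝ) : ℂ) :=
  integral_ofReal

lemma carle_char (μ ν : Measure ℝ) [IsProbabilityMeasure μ] [IsProbabilityMeasure ν]
    (hintμ : ∀ k : ℕ, Integrable (fun x : ℝ => x ^ k) μ)
    (hintν : ∀ k : ℕ, Integrable (fun x : ℝ => x ^ k) ν)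
    (K E : ℝ) (hK : 1 ≤ K) (hE : 1 ≤ E)
    (hmomμ : ∀ n : ℕ, ∫ x, |x|^n ∂μ ≤ K * E^n * n !)
    (hmomν : ∀ n : ℕ, ∫ x, |x|^n ∂ν ≤ K * E^n * n !)
    (h0 : ∀ j : ℕ, ∫ x, x^j ∂μ = ∫ x, x^j ∂ν) :
    ∀ (t : ℝ) (j : ℕ), ∫ x, (x:ℂ)^j * Complex.exp ((t*x:ℝ) * Complex.I) ∂μ
      = ∫ x, (x:ℂ)^j * Complex.exp ((t*x:ℝ) * Complex.I) ∂ν := by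
  set Q : ℝ → Prop := fun t => ∀ j : ℕ, ∫ x, (x:ℂ)^j * Complex.exp ((t*x:ℝ) * Complex.I) ∂μ
      = ∫ x, (x:ℂ)^j * Complex.exp ((t*x:ℝ) * Complex.I) ∂ν with hQ
  set h : ℝ := 1/(4*E) with hh
  have hE0 : (0:ℝ) < E := by linarith
  have hh0 : 0 < h := by rw [hh]; positivity
  have hQ0 : Q 0 := by
    intro j
    have hzero : ∀ x : ℝ, (x:ℂ)^j * Complex.exp (((0:ℝ)*x:ℝ) * Complex.I) = ((x^j : ℝ) : ℂ) := by
      intro x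
      rw [show ((0:ℝ)*x) = (0:ℝ) by ring]
      push_cast
      simp
    simp only [hzero]
    rw [integral_complex_ofReal' μ (fun x => x^j), integral_complex_ofReal' ν (fun x => x^j), h0 j]
  have hstep : ∀ t, Q t → ∀ s, |s| ≤ h → Q (t + s) := by
    intro t ht s hs j
    rw [twisted_expand μ hintμ K E hK hE hmomμ t s hs j,
      twisted_expand ν hintν K E hK hE hmomν t s hs j]
    congr 1
    funext k
    rw [ht (j+k)]
  have hmain : ∀ n : ℕ, ∀ t : ℝ, |t| ≤ n * h → Q t := by
    intro n
    induction n with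
    | zero =>
      intro t ht
      have : t = 0 := by
        have := abs_nonneg t
        have h1 : |t| = 0 := le_antisymm (by simpa using ht) this
        exact abs_eq_zero.mp h1
      rw [this]; exact hQ0
    | succ n ih =>
      intro t ht
      set s : ℝ := max (-h) (min h t) with hsdef
      set t' : ℝ := t - s with ht'def
      have hs : |s| ≤ h := by
        rw [abs_le]
        constructor
        · exact le_max_left _ _
        · exact max_le (by linarith) (min_le_left _ _)
      have habs := abs_le.1 ht
      have ht' : |t'| ≤ n * h := by
        have hnh : (0:ℝ) ≤ n * h := by positivity
        push_cast at habs ⊢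
        rcases le_total h t with h1 | h1
        · have hs1 : s = h := by
            rw [hsdef, min_eq_left h1, max_eq_right (by linarith)]
          rw [abs_le]; rw [ht'def, hs1]; constructor <;> nlinarith [habs.1, habs.2]
        · rcases le_total t (-h) with h2 | h2
          · have hs1 : s = -h := by
              rw [hsdef, min_eq_right (by linarith), max_eq_left h2]
            rw [abs_le]; rw [ht'def, hs1]; constructor <;> nlinarith [habs.1, habs.2]
          · have hs1 : s = t := by
              rw [hsdef, min_eq_right h1, max_eq_right h2]
            rw [ht'def, hs1]; simpa using hnh
      have := hstep t' (ih t' ht') s hs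
      rwa [show t' + s = t by rw [ht'def]; ring] at this
  intro t
  obtain ⟨n, hn⟩ := exists_nat_ge (|t| / h)
  refine hmain n t ?_
  rw [div_le_iff₀ hh0] at hn
  linarith


section Circle
variable (T : ℝ) [hT : Fact (0 < T)]

lemma integral_complex_ofReal'' {α : Type*} [MeasurableSpace α] (μ : Measure α) (f : α → ℝ) :
    ∫ x, ((f x : ℝ) : ℂ) ∂μ = ((∫ x, f x ∂μ : ℝ) : ℂ) :=
  integral_ofReal

lemma cont_integral_continuous (P : Measure (AddCircle T)) [IsProbabilityMeasure P] :
    Continuous fun g : C(AddCircle T, ℂ) => ∫ x, g x ∂P := by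
  have hlip : LipschitzWith 1 fun g : C(AddCircle T, ℂ) => ∫ x, g x ∂P := by
    apply LipschitzWith.of_dist_le_mul
    intro g g'
    have hint : ∀ g : C(AddCircle T, ℂ), Integrable g P := fun g =>
      Integrable.mono' (integrable_const ‖g‖) g.continuous.aestronglyMeasurable
        (Filter.Eventually.of_forall fun x => g.norm_coe_le_norm x)
    rw [dist_eq_norm, ← integral_sub (hint g) (hint g'), NNReal.coe_one, one_mul, dist_eq_norm]
    have hbd : ∀ x, ‖g x - g' x‖ ≤ ‖g - g'‖ := fun x => by
      have := (g - g').norm_coe_le_norm x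
      simpa using this
    calc ‖∫ x, (g x - g' x) ∂P‖ ≤ ‖g - g'‖ * (P univ).toReal :=
          norm_integral_le_of_norm_le_const (Filter.Eventually.of_forall hbd)
      _ = ‖g - g'‖ := by simp
  exact hlip.continuous

lemma circle_eq (μ ν : Measure ℝ) [IsProbabilityMeasure μ] [IsProbabilityMeasure ν]
    (hchar : ∀ t : ℝ, ∫ x, Complex.exp ((t*x:ℝ) * Complex.I) ∂μ
      = ∫ x, Complex.exp ((t*x:ℝ) * Complex.I) ∂ν) :
    Measure.map ((↑) : ℝ → AddCircle T) μ = Measure.map ((↑) : ℝ → AddCircle T) ν := by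
  set μT := Measure.map ((↑) : ℝ → AddCircle T) μ with hμT
  set νT := Measure.map ((↑) : ℝ → AddCircle T) ν with hνT
  haveI : IsProbabilityMeasure μT := Measure.isProbabilityMeasure_map AddCircle.measurable_mk'.aemeasurable
  haveI : IsProbabilityMeasure νT := Measure.isProbabilityMeasure_map AddCircle.measurable_mk'.aemeasurable
  -- Fourier coefficients agree
  have hfourier : ∀ n : ℤ, ∫ z, fourier n z ∂μT = ∫ z, fourier n z ∂νT := by
    intro n
    rw [hμT, hνT,
      integral_map AddCircle.measurable_mk'.aemeasurable
        (fourier n).continuous.aestronglyMeasurable,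
      integral_map AddCircle.measurable_mk'.aemeasurable
        (fourier n).continuous.aestronglyMeasurable]
    have harg : ∀ x : ℝ, fourier n ((x : ℝ) : AddCircle T)
        = Complex.exp (((2*Real.pi*n/T)*x : ℝ) * Complex.I) := by
      intro x
      rw [fourier_coe_apply]
      congr 1
      push_cast
      ring
    simp_rw [harg]
    exact hchar (2*Real.pi*n/T)
  -- all continuous functions agree
  have hall : ∀ g : C(AddCircle T, ℂ), ∫ z, g z ∂μT = ∫ z, g z ∂νT := by
    set S : Submodule ℂ C(AddCircle T, ℂ) :=
      { carrier := {g | ∫ z, g z ∂μT = ∫ z, g z ∂νT}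
        add_mem' := by
          intro g g' hg hg'
          have hint : ∀ (P : Measure (AddCircle T)) (_ : IsProbabilityMeasure P)
              (g : C(AddCircle T, ℂ)), Integrable g P := fun P hP g =>
            Integrable.mono' (integrable_const ‖g‖) g.continuous.aestronglyMeasurable
              (Filter.Eventually.of_forall fun x => g.norm_coe_le_norm x)
          simp only [Set.mem_setOf_eq, ContinuousMap.coe_add, Pi.add_apply] at *
          rw [integral_add (hint μT ‹_› g) (hint μT ‹_› g'),
            integral_add (hint νT ‹_› g) (hint νT ‹_› g'), hg, hg']
        zero_mem' := by simp
        smul_mem' := by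
          intro c g hg
          simp only [Set.mem_setOf_eq, ContinuousMap.coe_smul, Pi.smul_apply, smul_eq_mul] at *
          rw [integral_const_mul, integral_const_mul, hg] } with hS
    have hclosed : IsClosed (S : Set C(AddCircle T, ℂ)) :=
      isClosed_eq (cont_integral_continuous T μT) (cont_integral_continuous T νT)
    have hspan : Submodule.span ℂ (Set.range (@fourier T)) ≤ S := by
      rw [Submodule.span_le]
      rintro g ⟨n, rfl⟩
      exact hfourier n
    have htop := span_fourier_closure_eq_top (T := T)
    intro g
    have hg : g ∈ (Submodule.span ℂ (Set.range (@fourier T))).topologicalClosure := by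
      rw [htop]; trivial
    exact (Submodule.topologicalClosure_minimal _ hspan hclosed) hg
  -- conclude
  apply ext_of_forall_lintegral_eq_of_IsFiniteMeasure
  intro f
  have hfr : Continuous fun z : AddCircle T => ((f z : ℝ) : ℂ) :=
    Complex.continuous_ofReal.comp (NNReal.continuous_coe.comp f.continuous)
  have hre := hall ⟨fun z => ((f z : ℝ) : ℂ), hfr⟩
  simp only [ContinuousMap.coe_mk] at hre
  rw [integral_complex_ofReal'' μT _, integral_complex_ofReal'' νT _] at hre
  have hreal : ∫ z, (f z : ℝ) ∂μT = ∫ z, (f z : ℝ) ∂νT := by exact_mod_cast hre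
  have hint : ∀ (P : Measure (AddCircle T)), IsProbabilityMeasure P →
      Integrable (fun z => (f z : ℝ)) P := by
    intro P hP
    obtain ⟨c, hc⟩ := f.bounded
    refine Integrable.mono' (integrable_const (c + (f 0 : ℝ))) ?_ ?_
    · exact (NNReal.continuous_coe.comp f.continuous).aestronglyMeasurable
    · filter_upwards with z
      rw [Real.norm_eq_abs, _root_.abs_of_nonneg (f z).coe_nonneg]
      have h1 := hc z 0
      rw [NNReal.dist_eq] at h1
      have h2 := abs_le.1 h1
      linarith [h2.2]
  rw [lintegral_coe_eq_integral _ (hint μT ‹_›), lintegral_coe_eq_integral _ (hint νT ‹_›), hreal]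
end Circle

section Transfer

lemma tail_est (P : Measure ℝ) [IsProbabilityMeasure P] (T : ℝ) [hTf : Fact (0 < T)]
    (B : Set ℝ) (hB : MeasurableSet B) (hBsub : B ⊆ Ioc (-(T/2)) (-(T/2)+T)) :
    P B ≤ Measure.map ((↑) : ℝ → AddCircle T) P
        ((AddCircle.measurableEquivIoc T (-(T/2))) ⁻¹' (Subtype.val ⁻¹' B))
    ∧ Measure.map ((↑) : ℝ → AddCircle T) P
        ((AddCircle.measurableEquivIoc T (-(T/2))) ⁻¹' (Subtype.val ⁻¹' B))
      ≤ P B + P {x : ℝ | T/2 ≤ |x|} := by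
  have hT : 0 < T := hTf.out
  set a : ℝ := -(T/2) with ha
  set B' : Set (AddCircle T) :=
    (AddCircle.measurableEquivIoc T a) ⁻¹' (Subtype.val ⁻¹' B) with hB'
  have hB'meas : MeasurableSet B' :=
    (hB.preimage measurable_subtype_coe).preimage (AddCircle.measurableEquivIoc T a).measurable
  have hmapB' : Measure.map ((↑) : ℝ → AddCircle T) P B' = P (((↑) : ℝ → AddCircle T) ⁻¹' B') :=
    Measure.map_apply AddCircle.measurable_mk' hB'meas
  have hpre : (((↑) : ℝ → AddCircle T) ⁻¹' B') = {x : ℝ | toIocMod hT a x ∈ B} := by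
    ext x
    simp only [hB', Set.mem_preimage, Set.mem_setOf_eq]
    have hE : ((AddCircle.measurableEquivIoc T a) ((x : ℝ) : AddCircle T) : ℝ)
        = toIocMod hT a x := by
      show (((AddCircle.equivIoc T a) ((x : ℝ) : AddCircle T)) : ℝ) = toIocMod hT a x
      rw [AddCircle.equivIoc, QuotientAddGroup.equivIocMod_coe]
    rw [hE]
  have hsub1 : B ⊆ (((↑) : ℝ → AddCircle T) ⁻¹' B') := by
    rw [hpre]
    intro x hx
    have hmem : x ∈ Ioc a (a + T) := hBsub hx
    simp only [Set.mem_setOf_eq]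
    rw [(toIocMod_eq_self hT).mpr hmem]
    exact hx
  have hsub2 : (((↑) : ℝ → AddCircle T) ⁻¹' B') ⊆ B ∪ {x : ℝ | T/2 ≤ |x|} := by
    rw [hpre]
    intro x hx
    simp only [Set.mem_setOf_eq] at hx
    set y : ℝ := toIocMod hT a x with hy
    set n : ℤ := toIocDiv hT a x with hn
    have hxy : x - y = n • T := by rw [hy, hn]; exact self_sub_toIocMod hT a x
    rcases eq_or_ne n 0 with h0 | h0
    · left
      have : x = y := by rw [h0] at hxy; simpa using sub_eq_zero.mp (by simpa using hxy)
      rw [this]; exact hx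
    · right
      have hyB := hBsub hx
      have hybound : |y| ≤ T/2 := by
        rw [abs_le]
        constructor
        · have := hyB.1; rw [ha] at this; linarith
        · have := hyB.2; rw [ha] at this; linarith
      have hnT : (1:ℝ) ≤ |(n:ℝ)| := by
        have : (1:ℤ) ≤ |n| := Int.one_le_abs h0
        exact_mod_cast this
      have hxeq : x = y + n * T := by
        have : x - y = (n:ℝ) * T := by rw [hxy]; simp [zsmul_eq_mul]
        linarith
      have habs : T ≤ |(n:ℝ) * T| := by
        rw [abs_mul, abs_of_pos hT]
        nlinarith
      simp only [Set.mem_setOf_eq]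
      calc T/2 = T - T/2 := by ring
        _ ≤ |(n:ℝ) * T| - |y| := by linarith
        _ ≤ |x| := by
            rw [hxeq]
            have := abs_add_le y ((n:ℝ)*T)
            have h2 := abs_sub_abs_le_abs_sub ((n:ℝ)*T) (-y)
            simp only [abs_neg, sub_neg_eq_add] at h2
            calc |(n:ℝ)*T| - |y| ≤ |(n:ℝ)*T + y| := h2
              _ = |y + (n:ℝ)*T| := by rw [add_comm]
  constructor
  · rw [hmapB']
    exact measure_mono hsub1
  · rw [hmapB']
    calc P (((↑) : ℝ → AddCircle T) ⁻¹' B') ≤ P (B ∪ {x : ℝ | T/2 ≤ |x|}) := measure_mono hsub2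
      _ ≤ P B + P {x : ℝ | T/2 ≤ |x|} := measure_union_le _ _

lemma measure_eq_of_circle (μ ν : Measure ℝ) [IsProbabilityMeasure μ] [IsProbabilityMeasure ν]
    (hmapeq : ∀ T : ℝ, 0 < T →
      Measure.map ((↑) : ℝ → AddCircle T) μ = Measure.map ((↑) : ℝ → AddCircle T) ν) :
    ν = μ := by
  have key : ∀ B : Set ℝ, MeasurableSet B → ∀ R : ℝ, 0 ≤ R → (∀ x ∈ B, |x| ≤ R) → μ B = ν B := by
    intro B hB R hR0 hBR
    set tail : ℕ → Set ℝ := fun n => {x : ℝ | R + 1 + n ≤ |x|} with htail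
    have htail_meas : ∀ n, MeasurableSet (tail n) := fun n =>
      (isClosed_le continuous_const _root_.continuous_abs).measurableSet
    have htail_anti : Antitone tail := by
      intro i j hij x hx
      simp only [htail, Set.mem_setOf_eq] at hx ⊢
      have : (i:ℝ) ≤ j := by exact_mod_cast hij
      linarith
    have htail_empty : ⋂ n, tail n = ∅ := by
      ext x
      simp only [Set.mem_iInter, Set.mem_empty_iff_false, iff_false, not_forall, htail,
        Set.mem_setOf_eq, not_le]
      obtain ⟨n, hn⟩ := exists_nat_gt (|x| - R - 1)
      exact ⟨n, by linarith⟩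
    have htail0 : ∀ (P : Measure ℝ), IsProbabilityMeasure P →
        Tendsto (fun n => P (tail n)) atTop (𝓝 0) := by
      intro P hP
      have := tendsto_measure_iInter_atTop (μ := P)
        (fun n => (htail_meas n).nullMeasurableSet) htail_anti
        ⟨0, measure_ne_top P _⟩
      rwa [htail_empty, measure_empty] at this
    have hstep : ∀ n : ℕ, μ B ≤ ν B + ν (tail n) ∧ ν B ≤ μ B + μ (tail n) := by
      intro n
      set T : ℝ := 2*(R+1+n) with hTdef
      have hT : 0 < T := by rw [hTdef]; positivity
      haveI : Fact (0 < T) := ⟨hT⟩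
      have hT2 : T/2 = R+1+n := by rw [hTdef]; ring
      have hBsub : B ⊆ Ioc (-(T/2)) (-(T/2)+T) := by
        intro x hx
        have h1 := abs_le.1 (hBR x hx)
        constructor
        · rw [hT2]; push_cast; nlinarith [h1.1, (Nat.cast_nonneg n : (0:ℝ) ≤ n)]
        · rw [hT2]; push_cast; nlinarith [h1.2, (Nat.cast_nonneg n : (0:ℝ) ≤ n)]
      have htailT : {x : ℝ | T/2 ≤ |x|} = tail n := by
        ext x; simp only [Set.mem_setOf_eq, htail, hT2]
      obtain ⟨hμ1, hμ2⟩ := tail_est μ T B hB hBsub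
      obtain ⟨hν1, hν2⟩ := tail_est ν T B hB hBsub
      rw [htailT] at hμ2 hν2
      rw [hmapeq T hT] at hμ1 hμ2
      constructor
      · exact le_trans hμ1 hν2
      · exact le_trans hν1 (by rw [← hmapeq T hT] at hμ2 ⊢; exact hμ2)
    have h1 : μ B ≤ ν B := by
      have hlim : Tendsto (fun n => ν B + ν (tail n)) atTop (𝓝 (ν B + 0)) :=
        Tendsto.add tendsto_const_nhds (htail0 ν ‹_›)
      rw [add_zero] at hlim
      exact ge_of_tendsto' hlim (fun n => (hstep n).1)
    have h2 : ν B ≤ μ B := by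
      have hlim : Tendsto (fun n => μ B + μ (tail n)) atTop (𝓝 (μ B + 0)) :=
        Tendsto.add tendsto_const_nhds (htail0 μ ‹_›)
      rw [add_zero] at hlim
      exact ge_of_tendsto' hlim (fun n => (hstep n).2)
    exact le_antisymm h1 h2
  apply Measure.ext
  intro S hS
  set Sn : ℕ → Set ℝ := fun n => S ∩ {x : ℝ | |x| ≤ (n:ℝ)} with hSn
  have hSn_meas : ∀ n, MeasurableSet (Sn n) := fun n =>
    hS.inter (isClosed_le _root_.continuous_abs continuous_const).measurableSet
  have hmono : Monotone Sn := by
    intro i j hij x hx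
    refine ⟨hx.1, ?_⟩
    have : (i:ℝ) ≤ j := by exact_mod_cast hij
    have h2 := hx.2
    simp only [Set.mem_setOf_eq] at h2 ⊢
    linarith
  have hunion : ⋃ n, Sn n = S := by
    ext x
    simp only [Set.mem_iUnion, hSn, Set.mem_inter_iff, Set.mem_setOf_eq]
    constructor
    · rintro ⟨n, hn, _⟩; exact hn
    · intro hx
      obtain ⟨n, hn⟩ := exists_nat_ge |x|
      exact ⟨n, hx, hn⟩
  have hkey : ∀ n, μ (Sn n) = ν (Sn n) := fun n =>
    key (Sn n) (hSn_meas n) (n:ℝ) (Nat.cast_nonneg n) (fun x hx => hx.2)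
  have hμ : μ S = ⨆ n, μ (Sn n) := by
    conv_lhs => rw [← hunion]
    exact Directed.measure_iUnion hmono.directed_le
  have hν : ν S = ⨆ n, ν (Sn n) := by
    conv_lhs => rw [← hunion]
    exact Directed.measure_iUnion hmono.directed_le
  rw [hμ, hν]
  exact iSup_congr fun n => (hkey n).symm
end Transfer


lemma carle_extract (m : ℕ → ℝ) (hnn : ∀ k : ℕ, 0 ≤ m (2*k))
    (hC : ∃ C : ℝ, ∀ᶠ k : ℕ in atTop, (m (2 * k)) ^ ((1 : ℝ) / (2 * k)) / (2 * k) ≤ C) :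
    ∃ C : ℝ, 1 ≤ C ∧ ∃ N : ℕ, ∀ k, N ≤ k → m (2*k) ≤ (2*C*k)^(2*k) := by
  obtain ⟨C0, hC0⟩ := hC
  obtain ⟨N0, hN0⟩ := eventually_atTop.mp hC0
  refine ⟨max C0 1, le_max_right _ _, max N0 1, fun k hk => ?_⟩
  have hk1 : 1 ≤ k := le_trans (le_max_right N0 1) hk
  have hk1' : (1:ℝ) ≤ (k:ℝ) := by exact_mod_cast hk1
  have hkpos : (0:ℝ) < 2*(k:ℝ) := by linarith
  have h1 := hN0 k (le_trans (le_max_left N0 1) hk)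
  rw [div_le_iff₀ hkpos] at h1
  have h2 : (m (2*k)) ^ ((1:ℝ)/(2*(k:ℝ))) ≤ 2*(max C0 1)*(k:ℝ) := by
    have hle : C0 ≤ max C0 1 := le_max_left _ _
    nlinarith [h1]
  have h3 : ((m (2*k)) ^ ((1:ℝ)/(2*(k:ℝ))))^(2*k) ≤ (2*(max C0 1)*(k:ℝ))^(2*k) :=
    pow_le_pow_left₀ (Real.rpow_nonneg (hnn k) _) h2 _
  have h4 : ((m (2*k)) ^ ((1:ℝ)/(2*(k:ℝ))))^(2*k) = m (2*k) := by
    rw [← Real.rpow_natCast ((m (2*k)) ^ ((1:ℝ)/(2*(k:ℝ)))) (2*k), ← Real.rpow_mul (hnn k)]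
    have he : ((1:ℝ)/(2*(k:ℝ))) * (((2*k : ℕ)):ℝ) = 1 := by
      push_cast
      field_simp
    rw [he, Real.rpow_one]
  rw [h4] at h3
  exact h3


/-- Carleman's condition: if the even moments `m_{2k}` of `μ` satisfy
`limsup m_{2k}^{1/(2k)}/(2k) < ∞`, then `μ` is the unique probability measure
with moment sequence `(m_k)`. -/
theorem stmt11 (μ : Measure ℝ) [IsProbabilityMeasure μ] (m : ℕ → ℝ)
    (hint : ∀ k : ℕ, Integrable (fun x : ℝ => x ^ k) μ)
    (hm : ∀ k : ℕ, ∫ x, x ^ k ∂μ = m k)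
    (hCarleman : ∃ C : ℝ, ∀ᶠ k : ℕ in atTop,
      (m (2 * k)) ^ ((1 : ℝ) / (2 * k)) / (2 * k) ≤ C) :
    ∀ ν : Measure ℝ, IsProbabilityMeasure ν →
      (∀ k : ℕ, Integrable (fun x : ℝ => x ^ k) ν ∧ ∫ x, x ^ k ∂ν = m k) →
      ν = μ := by
  intro ν hνinst hkν
  have hintν : ∀ k : ℕ, Integrable (fun x : ℝ => x ^ k) ν := fun k => (hkν k).1
  have hmν : ∀ k : ℕ, ∫ x, x ^ k ∂ν = m k := fun k => (hkν k).2
  have hnn : ∀ k : ℕ, 0 ≤ m (2*k) := by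
    intro k
    rw [← hm (2*k)]
    exact integral_nonneg fun x => Even.pow_nonneg (even_two_mul k) x
  obtain ⟨C, hC1, N, hbd⟩ := carle_extract m hnn hCarleman
  have hbdμ : ∀ k, N ≤ k → ∫ x, x ^ (2*k) ∂μ ≤ (2*C*k)^(2*k) := fun k hk => by
    rw [hm (2*k)]; exact hbd k hk
  have hbdν : ∀ k, N ≤ k → ∫ x, x ^ (2*k) ∂ν ≤ (2*C*k)^(2*k) := fun k hk => by
    rw [hmν (2*k)]; exact hbd k hk
  obtain ⟨Kμ, hKμ1, hKμ⟩ := carle_single μ hint C N hC1 hbdμ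
  obtain ⟨Kν, hKν1, hKν⟩ := carle_single ν hintν C N hC1 hbdν
  set E : ℝ := 4*C*Real.exp 1 with hE
  have hexp1 : 1 ≤ Real.exp 1 := Real.one_le_exp (by norm_num)
  have hE1 : 1 ≤ E := by rw [hE]; nlinarith
  set K : ℝ := max Kμ Kν with hK
  have hK1 : 1 ≤ K := le_trans hKμ1 (le_max_left _ _)
  have hpos : ∀ n : ℕ, (0:ℝ) ≤ E^n * n ! := fun n => by positivity
  have hmomμ : ∀ n : ℕ, ∫ x, |x|^n ∂μ ≤ K * E^n * n ! := by
    intro n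
    calc ∫ x, |x|^n ∂μ ≤ Kμ * E^n * n ! := hKμ n
      _ ≤ K * E^n * n ! := by
          have := le_max_left Kμ Kν
          have h2 := hpos n
          nlinarith
  have hmomν : ∀ n : ℕ, ∫ x, |x|^n ∂ν ≤ K * E^n * n ! := by
    intro n
    calc ∫ x, |x|^n ∂ν ≤ Kν * E^n * n ! := hKν n
      _ ≤ K * E^n * n ! := by
          have := le_max_right Kμ Kν
          have h2 := hpos n
          nlinarith
  have h0 : ∀ j : ℕ, ∫ x, x^j ∂μ = ∫ x, x^j ∂ν := fun j => by rw [hm j, hmν j]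
  have hchar_all := carle_char μ ν hint hintν K E hK1 hE1 hmomμ hmomν h0
  have hchar : ∀ t : ℝ, ∫ x, Complex.exp ((t*x:ℝ) * Complex.I) ∂μ
      = ∫ x, Complex.exp ((t*x:ℝ) * Complex.I) ∂ν := by
    intro t
    have := hchar_all t 0
    simpa using this
  have hmapeq : ∀ T : ℝ, 0 < T →
      Measure.map ((↑) : ℝ → AddCircle T) μ = Measure.map ((↑) : ℝ → AddCircle T) ν := by
    intro T hT
    haveI : Fact (0 < T) := ⟨hT⟩
    exact circle_eq T μ ν hchar
  exact measure_eq_of_circle μ ν hmapeq
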